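/- Let ν > 0, ρ > 0, Φ ≥ 0, M ≥ 0 and t₀ ≤ t₁. Suppose H₀ : ℝ → ℝ is continuously differentiable on [t₀,t₁] with 0 ≤ H₀(s) ≤ M for all s ∈ [t₀,t₁], H₁ : ℝ → ℝ is continuous and nonnegative on [t₀,t₁], and for all s ∈ [t₀,t₁] one has (1/2)·H₀'(s) ≤ −ν·H₁(s) + √(H₀(s))·Φ. Then ν·∫_{t₀}^{t₁} e^{ρ(s−t₀)}·H₁(s) ds ≤ M/2 + ((e^{ρ(t₁−t₀)} − 1)/ρ)·(ρM/2 + √M·Φ). -/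

import Mathlib

open MeasureTheory intervalIntegral

/-- the exponentially weighted time integral of the enstrophy:
if the energy `H₀` satisfies Leray's energy inequality and is bounded by `M`, then
`ν ∫ e^{ρ(s-t₀)} H₁ ≤ M/2 + ((e^{ρ(t₁-t₀)} - 1)/ρ)(ρM/2 + √M Φ)`. -/
theorem weighted_enstrophy_integral_bound
    (ν ρ Φ M t₀ t₁ : ℝ) (hν : 0 < ν) (hρ : 0 < ρ) (hΦ : 0 ≤ Φ) (hM : 0 ≤ M)
    (ht : t₀ ≤ t₁) (H₀ H₀' H₁ : ℝ → ℝ)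
    (hderiv : ∀ s ∈ Set.Icc t₀ t₁, HasDerivWithinAt H₀ (H₀' s) (Set.Icc t₀ t₁) s)
    (hderiv_cont : ContinuousOn H₀' (Set.Icc t₀ t₁))
    (hH₀ : ∀ s ∈ Set.Icc t₀ t₁, 0 ≤ H₀ s ∧ H₀ s ≤ M)
    (hH₁cont : ContinuousOn H₁ (Set.Icc t₀ t₁))
    (hH₁ : ∀ s ∈ Set.Icc t₀ t₁, 0 ≤ H₁ s)
    (hineq : ∀ s ∈ Set.Icc t₀ t₁,
      (1 / 2) * H₀' s ≤ -ν * H₁ s + Real.sqrt (H₀ s) * Φ) :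
    ν * ∫ s in t₀..t₁, Real.exp (ρ * (s - t₀)) * H₁ s ≤
      M / 2 + ((Real.exp (ρ * (t₁ - t₀)) - 1) / ρ) * (ρ * M / 2 + Real.sqrt M * Φ) := by
  set w : ℝ → ℝ := fun s => Real.exp (ρ * (s - t₀)) with hw
  set C : ℝ := ρ * M / 2 + Real.sqrt M * Φ with hC
  have huIcc : Set.uIcc t₀ t₁ = Set.Icc t₀ t₁ := Set.uIcc_of_le ht
  have hwcont : Continuous w := by continuity
  have hH₀cont : ContinuousOn H₀ (Set.Icc t₀ t₁) :=
    fun s hs => (hderiv s hs).continuousWithinAt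
  -- derivative of w at any point
  have hwderiv : ∀ x : ℝ, HasDerivAt w (ρ * w x) x := by
    intro x
    have h1 : HasDerivAt (fun s : ℝ => ρ * (s - t₀)) ρ x := by
      simpa using ((hasDerivAt_id x).sub_const t₀).const_mul ρ
    simpa [hw, mul_comm] using h1.exp
  -- derivative of g = w * H₀ at interior points
  set g' : ℝ → ℝ := fun s => ρ * w s * H₀ s + w s * H₀' s with hg'
  have hgderiv : ∀ x ∈ Set.Ioo t₀ t₁,
      HasDerivAt (fun s => w s * H₀ s) (g' x) x := by
    intro x hx
    have hH : HasDerivAt H₀ (H₀' x) x :=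
      (hderiv x (Set.Ioo_subset_Icc_self hx)).hasDerivAt
        (Icc_mem_nhds hx.1 hx.2)
    have := (hwderiv x).mul hH
    exact this
  -- FTC : ∫ g' = w t₁ * H₀ t₁ - w t₀ * H₀ t₀
  have hg'cont : ContinuousOn g' (Set.Icc t₀ t₁) := by
    apply ContinuousOn.add
    · exact ((continuousOn_const.mul hwcont.continuousOn).mul hH₀cont)
    · exact hwcont.continuousOn.mul hderiv_cont
  have hg'int : IntervalIntegrable g' volume t₀ t₁ :=
    (hg'cont.mono (by rw [huIcc])).intervalIntegrable
  have hFTC : ∫ s in t₀..t₁, g' s = w t₁ * H₀ t₁ - w t₀ * H₀ t₀ := by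
    apply intervalIntegral.integral_eq_sub_of_hasDeriv_right_of_le ht
    · exact hwcont.continuousOn.mul hH₀cont
    · exact fun x hx => (hgderiv x hx).hasDerivWithinAt
    · exact hg'int
  -- integral of w
  have hwint : ∫ s in t₀..t₁, w s = (Real.exp (ρ * (t₁ - t₀)) - 1) / ρ := by
    have : ∀ x ∈ Set.uIcc t₀ t₁, HasDerivAt (fun s => w s / ρ) (w x) x := by
      intro x _
      have := (hwderiv x).div_const ρ
      rw [mul_div_cancel_left₀ _ hρ.ne'] at this
      exact this
    rw [intervalIntegral.integral_eq_sub_of_hasDerivAt this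
      (hwcont.intervalIntegrable t₀ t₁)]
    simp [hw]
    ring
  -- integrability of the two integrands to compare
  have hint1 : IntervalIntegrable (fun s => ν * (w s * H₁ s)) volume t₀ t₁ := by
    apply ContinuousOn.intervalIntegrable
    rw [huIcc]
    exact continuousOn_const.mul (hwcont.continuousOn.mul hH₁cont)
  have hint2 : IntervalIntegrable (fun s => -(1/2) * g' s + w s * C) volume t₀ t₁ := by
    apply IntervalIntegrable.add
    · exact hg'int.const_mul _
    · exact ((hwcont.mul continuous_const).continuousOn).intervalIntegrable
  -- pointwise comparison
  have hpt : ∀ s ∈ Set.Icc t₀ t₁,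
      ν * (w s * H₁ s) ≤ -(1/2) * g' s + w s * C := by
    intro s hs
    have hw0 : 0 ≤ w s := (Real.exp_pos _).le
    have h0 := hH₀ s hs
    have hsqrt : Real.sqrt (H₀ s) ≤ Real.sqrt M := Real.sqrt_le_sqrt h0.2
    have h1 : ν * H₁ s ≤ -(1/2) * H₀' s + Real.sqrt M * Φ := by
      have := hineq s hs
      nlinarith [mul_le_mul_of_nonneg_right hsqrt hΦ]
    have h2 : w s * (ν * H₁ s) ≤ w s * (-(1/2) * H₀' s + Real.sqrt M * Φ) :=
      mul_le_mul_of_nonneg_left h1 hw0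
    have h3 : 0 ≤ w s * (M - H₀ s) := mul_nonneg hw0 (by linarith [h0.2])
    simp only [hg', hC]
    nlinarith [h3]
  -- combine
  have hmono : ∫ s in t₀..t₁, ν * (w s * H₁ s) ≤
      ∫ s in t₀..t₁, (-(1/2) * g' s + w s * C) :=
    intervalIntegral.integral_mono_on ht hint1 hint2 hpt
  have hL : ∫ s in t₀..t₁, ν * (w s * H₁ s) = ν * ∫ s in t₀..t₁, w s * H₁ s :=
    intervalIntegral.integral_const_mul _ _
  have hR : ∫ s in t₀..t₁, (-(1/2) * g' s + w s * C)
      = -(1/2) * (w t₁ * H₀ t₁ - w t₀ * H₀ t₀)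
        + ((Real.exp (ρ * (t₁ - t₀)) - 1) / ρ) * C := by
    rw [intervalIntegral.integral_add (f := fun s => -(1/2) * g' s)
      (g := fun s => w s * C) (hg'int.const_mul _)
      ((hwcont.mul continuous_const).continuousOn.intervalIntegrable),
      intervalIntegral.integral_const_mul, hFTC,
      intervalIntegral.integral_mul_const, hwint]
  have hw1 : 0 ≤ w t₁ * H₀ t₁ :=
    mul_nonneg (Real.exp_pos _).le (hH₀ t₁ (Set.right_mem_Icc.mpr ht)).1
  have hwt₀ : w t₀ = 1 := by simp [hw]
  have hH₀t₀ : H₀ t₀ ≤ M := (hH₀ t₀ (Set.left_mem_Icc.mpr ht)).2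
  rw [← hL]
  calc ∫ s in t₀..t₁, ν * (w s * H₁ s)
      ≤ -(1/2) * (w t₁ * H₀ t₁ - w t₀ * H₀ t₀)
        + ((Real.exp (ρ * (t₁ - t₀)) - 1) / ρ) * C := hR ▸ hmono
    _ ≤ M / 2 + ((Real.exp (ρ * (t₁ - t₀)) - 1) / ρ) * C := by
        rw [hwt₀]; nlinarith [hw1]
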